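/- (Euler integral for the Appell F₁ function.) Let a > 0, α > 0, β > 0, and let ρ, λ be real, with u, v real numbers such that ua < 1 and va < 1. Then ∫₀^a x^{α-1}(a-x)^{β-1}(1-ux)^{-ρ}(1-vx)^{-λ} dx = a^{α+β-1} B(α,β) F₁(α, ρ, λ; α+β; ua, va), where F₁ is the Appell hypergeometric function of the first kind defined by its double power series F₁(α,ρ,λ;γ;x,y) = Σ_{j,k≥0} (α)_{j+k}(ρ)_j(λ)_k x^j y^k / ((γ)_{j+k} j! k!) for |x|,|y| < 1 (extended by the integral when the series does not converge). -/

import Mathlib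

open MeasureTheory Real Set

noncomputable def incBeta (x a b : ℝ) : ℝ :=
  ∫ t in (0:ℝ)..x, t ^ (a - 1) * (1 - t) ^ (b - 1)

noncomputable def poch (a : ℝ) (n : ℕ) : ℝ := ∏ i ∈ Finset.range n, (a + i)

/-- Appell hypergeometric function of the first kind, defined by its double power series. -/
noncomputable def appellF1 (α ρ lam γ x y : ℝ) : ℝ :=
  ∑' p : ℕ × ℕ,
    poch α (p.1 + p.2) * poch ρ p.1 * poch lam p.2 * x ^ p.1 * y ^ p.2 /
      (poch γ (p.1 + p.2) * (Nat.factorial p.1) * (Nat.factorial p.2))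

open Filter

lemma poch_zero (a : ℝ) : poch a 0 = 1 := rfl

lemma poch_succ (a : ℝ) (n : ℕ) : poch a (n + 1) = poch a n * (a + n) :=
  Finset.prod_range_succ _ _

lemma event_ratio (c : ℝ) {r r' : ℝ} (h0 : 0 ≤ r) (h : r < r') :
    ∀ᶠ n : ℕ in atTop, |c + n| * r ≤ n * r' := by
  have hpos : 0 < r' - r := by linarith
  filter_upwards [eventually_ge_atTop ⌈|c| * r / (r' - r)⌉₊] with n hn
  have h1 : |c| * r / (r' - r) ≤ n := le_trans (Nat.le_ceil _) (by exact_mod_cast hn)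
  have h2 : |c| * r ≤ n * (r' - r) := by
    rw [div_le_iff₀ hpos] at h1; linarith
  have h3 : |c + n| ≤ |c| + n := by
    calc |c + n| ≤ |c| + |(n:ℝ)| := abs_add_le _ _
    _ = |c| + n := by rw [Nat.abs_cast]
  nlinarith [mul_le_mul_of_nonneg_right h3 h0]

lemma summable_poch_geom (c : ℝ) {r : ℝ} (h0 : 0 ≤ r) (hr : r < 1) :
    Summable (fun n : ℕ => |poch c n| / n.factorial * r ^ n) := by
  set f : ℕ → ℝ := fun n => |poch c n| / n.factorial * r ^ n with hf
  have hnn : ∀ m, 0 ≤ f m := by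
    intro m; rw [hf]; positivity
  set r' : ℝ := (r + 1) / 2 with hr'
  have hrr' : r < r' := by rw [hr']; linarith
  have hr'1 : r' < 1 := by rw [hr']; linarith
  apply summable_of_ratio_norm_eventually_le hr'1
  filter_upwards [event_ratio c h0 hrr'] with n hn
  rw [Real.norm_eq_abs, Real.norm_eq_abs, abs_of_nonneg (hnn _), abs_of_nonneg (hnn _), hf]
  have hfac : (0:ℝ) < n.factorial := by exact_mod_cast n.factorial_pos
  simp only [poch_succ, abs_mul, Nat.factorial_succ]
  have key : |c + n| * r ≤ (n + 1) * r' := by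
    refine hn.trans ?_
    nlinarith [le_of_lt (lt_of_le_of_lt h0 hrr')]
  calc |poch c n| * |c + n| / ((n+1) * n.factorial : ℕ) * r ^ (n+1)
      = (|poch c n| / n.factorial * r ^ n) * ((|c + n| * r) / (n + 1)) := by
        push_cast; field_simp; ring
    _ ≤ (|poch c n| / n.factorial * r ^ n) * r' := by
        apply mul_le_mul_of_nonneg_left _ (by positivity)
        rw [div_le_iff₀ (by positivity)]
        linarith [key]
    _ = r' * (|poch c n| / n.factorial * r ^ n) := by ring

lemma summable_poch_deriv (c : ℝ) {r : ℝ} (h0 : 0 ≤ r) (hr : r < 1) :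
    Summable (fun n : ℕ => |poch c n| / n.factorial * n * r ^ (n - 1)) := by
  set f : ℕ → ℝ := fun n => |poch c n| / n.factorial * n * r ^ (n - 1) with hf
  have hnn : ∀ m, 0 ≤ f m := by
    intro m; rw [hf]; positivity
  set r' : ℝ := (r + 1) / 2 with hr'
  have hrr' : r < r' := by rw [hr']; linarith
  have hr'1 : r' < 1 := by rw [hr']; linarith
  apply summable_of_ratio_norm_eventually_le hr'1
  filter_upwards [event_ratio c h0 hrr', eventually_ge_atTop 1] with n hn hn1
  rw [Real.norm_eq_abs, Real.norm_eq_abs, abs_of_nonneg (hnn _), abs_of_nonneg (hnn _), hf]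
  have hfac : (0:ℝ) < n.factorial := by exact_mod_cast n.factorial_pos
  simp only [poch_succ, abs_mul, Nat.factorial_succ, Nat.add_sub_cancel]
  have hrw : r ^ n = r * r ^ (n - 1) := by
    conv_lhs => rw [← Nat.sub_add_cancel hn1, pow_succ]
    ring
  calc |poch c n| * |c + n| / ((n+1) * n.factorial : ℕ) * ((n+1 : ℕ) : ℝ) * r ^ n
      = |poch c n| / n.factorial * (|c + n| * r) * r ^ (n-1) := by
        rw [hrw]; push_cast; field_simp
    _ ≤ |poch c n| / n.factorial * (n * r') * r ^ (n-1) := by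
        apply mul_le_mul_of_nonneg_right _ (by positivity)
        exact mul_le_mul_of_nonneg_left hn (by positivity)
    _ = r' * (|poch c n| / n.factorial * n * r ^ (n-1)) := by ring

lemma summable_S (c : ℝ) {t : ℝ} (ht : |t| < 1) :
    Summable (fun n : ℕ => poch c n / n.factorial * t ^ n) := by
  apply Summable.of_abs
  refine (summable_poch_geom c (abs_nonneg t) ht).congr fun n => ?_
  rw [abs_mul, abs_div, abs_pow, Nat.abs_cast]

lemma summable_D (c : ℝ) {t : ℝ} (ht : |t| < 1) :
    Summable (fun n : ℕ => poch c n / n.factorial * (n * t ^ (n - 1))) := by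
  apply Summable.of_abs
  refine (summable_poch_deriv c (abs_nonneg t) ht).congr fun n => ?_
  rw [abs_mul, abs_mul, abs_div, abs_pow, Nat.abs_cast, Nat.abs_cast, mul_assoc]

lemma hasDerivAt_S (c : ℝ) {y : ℝ} (hy : |y| < 1) :
    HasDerivAt (fun z : ℝ => ∑' n : ℕ, poch c n / n.factorial * z ^ n)
      (∑' n : ℕ, poch c n / n.factorial * (n * y ^ (n - 1))) y := by
  set r : ℝ := (|y| + 1) / 2 with hrdef
  have hr0 : 0 ≤ r := by positivity
  have hr1 : r < 1 := by rw [hrdef]; linarith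
  have hyr : |y| < r := by rw [hrdef]; linarith
  apply hasDerivAt_tsum_of_isPreconnected (summable_poch_deriv c hr0 hr1)
    (isOpen_Ioo (a := -r) (b := r)) (convex_Ioo _ _).isPreconnected
    (g := fun n z => poch c n / n.factorial * z ^ n)
    (g' := fun n z => poch c n / n.factorial * (n * z ^ (n - 1)))
    (y₀ := 0)
  · intro n z hz
    exact (hasDerivAt_pow n z).const_mul _
  · intro n z hz
    rw [Real.norm_eq_abs, abs_mul, abs_mul, abs_div, abs_pow, Nat.abs_cast, Nat.abs_cast]
    rw [mul_assoc]
    apply mul_le_mul_of_nonneg_left _ (by positivity)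
    rw [mul_comm ((n:ℝ)) _, mul_comm ((n:ℝ)) _]
    apply mul_le_mul_of_nonneg_right _ (Nat.cast_nonneg n)
    apply pow_le_pow_left₀ (abs_nonneg z)
    rw [abs_le]
    constructor <;> [linarith [hz.1]; linarith [hz.2]]
  · have := abs_nonneg y
    rw [mem_Ioo]; constructor <;> [linarith; linarith]
  · apply summable_of_ne_finset_zero (s := {0})
    intro n hn
    simp only [Finset.mem_singleton] at hn
    rw [zero_pow hn, mul_zero]
  · rw [mem_Ioo]; constructor
    · linarith [neg_abs_le y]
    · linarith [le_abs_self y]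

lemma ode_S (c : ℝ) {y : ℝ} (hy : |y| < 1) :
    (1 - y) * (∑' n : ℕ, poch c n / n.factorial * (n * y ^ (n - 1))) =
      c * ∑' n : ℕ, poch c n / n.factorial * y ^ n := by
  set D := ∑' n : ℕ, poch c n / n.factorial * (n * y ^ (n - 1)) with hDdef
  set S := ∑' n : ℕ, poch c n / n.factorial * y ^ n with hSdef
  have hD : HasSum (fun n : ℕ => poch c n / n.factorial * (n * y ^ (n - 1))) D :=
    (summable_D c hy).hasSum
  have hS : HasSum (fun n : ℕ => poch c n / n.factorial * y ^ n) S :=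
    (summable_S c hy).hasSum
  -- shifted version of D
  have hshift : HasSum (fun k : ℕ => poch c (k + 1) / k.factorial * y ^ k) D := by
    have h0 : (fun n : ℕ => poch c n / n.factorial * (n * y ^ (n - 1))) 0 = 0 := by simp
    have := (hasSum_nat_add_iff (f := fun n : ℕ => poch c n / n.factorial * (n * y ^ (n - 1))) 1).mpr
      (by simpa [h0] using hD)
    refine this.congr_fun fun k => ?_
    rw [Nat.add_sub_cancel, Nat.factorial_succ]
    push_cast
    have : (k.factorial : ℝ) ≠ 0 := by exact_mod_cast k.factorial_pos.ne'
    field_simp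
  have hymul : HasSum (fun n : ℕ => poch c n / n.factorial * (n * y ^ n)) (y * D) := by
    refine (hD.mul_left y).congr_fun fun n => ?_
    cases n with
    | zero => simp
    | succ m =>
      rw [Nat.add_sub_cancel, pow_succ]
      ring
  have hcS : HasSum (fun n : ℕ => c * (poch c n / n.factorial * y ^ n)) (c * S) := hS.mul_left c
  have hcomb : HasSum
      (fun k : ℕ => poch c (k + 1) / k.factorial * y ^ k - poch c k / k.factorial * (k * y ^ k)
        - c * (poch c k / k.factorial * y ^ k)) (D - y * D - c * S) :=
    (hshift.sub hymul).sub hcS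
  have hzero : D - y * D - c * S = 0 := by
    refine (hcomb.congr_fun fun k => ?_).unique hasSum_zero
    rw [poch_succ]
    have : (k.factorial : ℝ) ≠ 0 := by exact_mod_cast k.factorial_pos.ne'
    field_simp
    ring
  linarith [hzero, sq_nonneg y]

lemma binom_hasSum (c : ℝ) {t : ℝ} (ht : |t| < 1) :
    HasSum (fun n : ℕ => poch c n / n.factorial * t ^ n) ((1 - t) ^ (-c)) := by
  set S : ℝ → ℝ := fun z => ∑' n : ℕ, poch c n / n.factorial * z ^ n with hSdef
  have hF : ∀ x : ℝ, |x| < 1 → HasDerivAt (fun z => S z * (1 - z) ^ c) 0 x := by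
    intro x hx
    obtain ⟨hx1, hx2⟩ := abs_lt.mp hx
    have hx3 : 0 < 1 - x := by linarith
    have hderivS := hasDerivAt_S c hx
    have h1 : HasDerivAt (fun z : ℝ => 1 - z) (-1) x := (hasDerivAt_id x).const_sub 1
    have h2 : HasDerivAt (fun z : ℝ => (1 - z) ^ c) (c * (1 - x) ^ (c - 1) * (-1)) x := by
      have := (Real.hasDerivAt_rpow_const (x := 1 - x) (p := c) (Or.inl hx3.ne')).comp x h1
      exact this.congr_deriv (by ring)
    have h3 := hderivS.mul h2
    refine h3.congr_deriv (Eq.symm ?_)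
    have hode := ode_S c hx
    have hrc : (1 - x) ^ c = (1 - x) ^ (c - 1) * (1 - x) := by
      nth_rewrite 1 [show c = c - 1 + 1 by ring]
      exact Real.rpow_add_one hx3.ne' _
    rw [hrc]
    linear_combination (-(1 : ℝ)) * (1 - x) ^ (c - 1) * hode
  have hS0 : S 0 = 1 := by
    rw [hSdef]
    simp only
    rw [tsum_eq_single 0 (fun n hn => by rw [zero_pow hn, mul_zero])]
    simp [poch_zero]
  have hkey : S t * (1 - t) ^ c = 1 := by
    obtain ⟨ht1, ht2⟩ := abs_lt.mp ht
    set a := min t 0 with ha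
    set b := max t 0 with hb
    have hsub : ∀ x ∈ Icc a b, |x| < 1 := by
      intro x hx
      rw [abs_lt]
      constructor
      · have : a ≤ x := hx.1
        have : -1 < a := by rw [ha]; rcases le_total t 0 with h|h <;> simp [min_eq_left, min_eq_right, h] <;> linarith
        linarith
      · have : x ≤ b := hx.2
        have : b < 1 := by rw [hb]; rcases le_total t 0 with h|h <;> simp [max_eq_left, max_eq_right, h] <;> linarith
        linarith
    have hcont : ContinuousOn (fun z => S z * (1 - z) ^ c) (Icc a b) :=
      fun x hx => ((hF x (hsub x hx)).continuousAt).continuousWithinAt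
    have hder : ∀ x ∈ Ico a b, HasDerivWithinAt (fun z => S z * (1 - z) ^ c) 0 (Ici x) x :=
      fun x hx => ((hF x (hsub x (Ico_subset_Icc_self hx))).hasDerivWithinAt)
    have hconst := constant_of_has_deriv_right_zero hcont hder
    have h1 := hconst t ⟨min_le_left _ _, le_max_left _ _⟩
    have h2 := hconst 0 ⟨min_le_right _ _, le_max_right _ _⟩
    rw [h1, ← h2, hS0, sub_zero, Real.one_rpow, one_mul]
  have hpos : 0 < 1 - t := by obtain ⟨h1, h2⟩ := abs_lt.mp ht; linarith
  have hAne : (1 - t) ^ c ≠ 0 := (Real.rpow_pos_of_pos hpos c).ne'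
  have hval : S t = (1 - t) ^ (-c) := by
    rw [Real.rpow_neg hpos.le]
    field_simp
    linarith [hkey]
  exact hval ▸ (summable_S c ht).hasSum

lemma poch_pos {a : ℝ} (ha : 0 < a) (n : ℕ) : 0 < poch a n :=
  Finset.prod_pos fun i _ => by positivity

lemma beta_integrable {a b : ℝ} (ha : 0 < a) (hb : 0 < b) :
    IntegrableOn (fun x : ℝ => x ^ (a - 1) * (1 - x) ^ (b - 1)) (Ioc 0 1) := by
  have hc := Complex.betaIntegral_convergent (u := (a:ℂ)) (v := (b:ℂ))
    (by simpa using ha) (by simpa using hb)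
  have h1 := hc.1.norm
  refine h1.congr ?_
  have hne : ∀ᵐ x ∂(volume.restrict (Ioc (0:ℝ) 1)), x ≠ 1 := by
    refine ae_restrict_of_ae ?_
    rw [ae_iff]
    simpa using measure_singleton (1:ℝ)
  filter_upwards [ae_restrict_mem measurableSet_Ioc, hne] with x hx hx1
  have hx0 : 0 < x := hx.1
  have hx2 : 0 < 1 - x := lt_of_le_of_ne (by linarith [hx.2]) (by intro h; exact hx1 (by linarith))
  rw [norm_mul]
  have e1 : ‖(x:ℂ) ^ ((a:ℂ) - 1)‖ = x ^ (a - 1) := by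
    rw [Complex.norm_cpow_eq_rpow_re_of_pos hx0]
    norm_num
  have e2 : ‖(1 - (x:ℂ)) ^ ((b:ℂ) - 1)‖ = (1 - x) ^ (b - 1) := by
    have : (1 - (x:ℂ)) = ((1 - x : ℝ) : ℂ) := by push_cast; ring
    rw [this, Complex.norm_cpow_eq_rpow_re_of_pos hx2]
    norm_num
  rw [e1, e2]

lemma incBeta_eq_Gamma {a b : ℝ} (ha : 0 < a) (hb : 0 < b) :
    incBeta 1 a b = Real.Gamma a * Real.Gamma b / Real.Gamma (a + b) := by
  have hcb : Complex.betaIntegral (a:ℂ) (b:ℂ) = ((incBeta 1 a b : ℝ) : ℂ) := by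
    rw [Complex.betaIntegral, incBeta, ← intervalIntegral.integral_ofReal]
    refine intervalIntegral.integral_congr fun x hx => ?_
    rw [uIcc_of_le zero_le_one] at hx
    have hx0 : 0 ≤ x := hx.1
    have hx1 : 0 ≤ 1 - x := by linarith [hx.2]
    rw [Complex.ofReal_mul, Complex.ofReal_cpow hx0, Complex.ofReal_cpow hx1]
    push_cast
    ring
  have h := Complex.Gamma_mul_Gamma_eq_betaIntegral
    (s := (a:ℂ)) (t := (b:ℂ)) (by simpa using ha) (by simpa using hb)
  rw [hcb] at h
  have : ((a:ℂ) + b) = ((a + b : ℝ) : ℂ) := by push_cast; ring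
  rw [this, Complex.Gamma_ofReal, Complex.Gamma_ofReal, Complex.Gamma_ofReal] at h
  have h2 : Real.Gamma a * Real.Gamma b = Real.Gamma (a + b) * incBeta 1 a b := by
    exact_mod_cast h
  have h3 : Real.Gamma (a + b) ≠ 0 := (Real.Gamma_pos_of_pos (by linarith)).ne'
  field_simp
  linarith [h2]

lemma Gamma_add_nat {a : ℝ} (ha : 0 < a) (n : ℕ) :
    Real.Gamma (a + n) = Real.Gamma a * poch a n := by
  induction n with
  | zero => simp [poch]
  | succ m ih =>
    have h1 : a + ((m + 1 : ℕ) : ℝ) = (a + m) + 1 := by push_cast; ring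
    have h2 : (0:ℝ) < a + m := by positivity
    rw [h1, Real.Gamma_add_one h2.ne', ih, poch_succ]
    ring

lemma incBeta_shift {a b : ℝ} (ha : 0 < a) (hb : 0 < b) (n : ℕ) :
    incBeta 1 (a + n) b = incBeta 1 a b * (poch a n / poch (a + b) n) := by
  have han : (0:ℝ) < a + n := by positivity
  rw [incBeta_eq_Gamma han hb, incBeta_eq_Gamma ha hb]
  have h1 : a + (n:ℝ) + b = (a + b) + n := by ring
  rw [h1, Gamma_add_nat ha n, Gamma_add_nat (by linarith : (0:ℝ) < a + b) n]
  have g1 : Real.Gamma (a + b) ≠ 0 := (Real.Gamma_pos_of_pos (by linarith)).ne'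
  have g2 : poch (a + b) n ≠ 0 := (poch_pos (by linarith) n).ne'
  field_simp

set_option maxHeartbeats 2000000 in
theorem euler_integral_appellF1 (α β ρ lam u v : ℝ)
    (hα : 0 < α) (hβ : 0 < β) (hu : |u| < 1) (hv : |v| < 1) :
    ∫ x in (0:ℝ)..1, x ^ (α - 1) * (1 - x) ^ (β - 1) *
        (1 - u * x) ^ (-ρ) * (1 - v * x) ^ (-lam) =
      incBeta 1 α β * appellF1 α ρ lam (α + β) u v := by
  set B := incBeta 1 α β with hB
  set c : ℕ × ℕ → ℝ := fun p =>
    (poch ρ p.1 * u ^ p.1 / p.1.factorial) * (poch lam p.2 * v ^ p.2 / p.2.factorial) with hc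
  set g : ℕ → ℝ → ℝ := fun n x => x ^ (α - 1) * (1 - x) ^ (β - 1) * x ^ n with hg
  set h : ℕ × ℕ → ℝ → ℝ := fun p x => c p * g (p.1 + p.2) x with hh
  -- basic facts about g
  have hg_nonneg : ∀ n, ∀ x ∈ Ioc (0:ℝ) 1, 0 ≤ g n x := by
    intro n x hx
    have hx0 : (0:ℝ) < x := hx.1
    have hx1 : (0:ℝ) ≤ 1 - x := by linarith [hx.2]
    rw [hg]
    have := Real.rpow_nonneg hx1 (β - 1)
    positivity
  have hg_eq : ∀ n : ℕ, EqOn (g n) (fun x => x ^ ((α + n) - 1) * (1 - x) ^ (β - 1)) (Ioc 0 1) := by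
    intro n x hx
    have hx0 : (0:ℝ) < x := hx.1
    rw [hg]
    simp only
    have : (x:ℝ) ^ (n:ℕ) = x ^ ((n:ℕ):ℝ) := (Real.rpow_natCast x n).symm
    rw [mul_comm (x ^ (α - 1) * (1 - x) ^ (β - 1)) _, ← mul_assoc, this, ← Real.rpow_add hx0]
    ring_nf
  have hg_int : ∀ n : ℕ, IntegrableOn (g n) (Ioc 0 1) := by
    intro n
    exact (IntegrableOn.congr_fun (beta_integrable (by positivity : (0:ℝ) < α + n) hβ)
      (fun x hx => (hg_eq n hx).symm) measurableSet_Ioc)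
  have hg_val : ∀ n : ℕ, ∫ x in Ioc (0:ℝ) 1, g n x = incBeta 1 (α + n) β := by
    intro n
    rw [setIntegral_congr_fun measurableSet_Ioc (hg_eq n)]
    rw [incBeta, intervalIntegral.integral_of_le zero_le_one]
  have hg_le : ∀ n : ℕ, ∫ x in Ioc (0:ℝ) 1, g n x ≤ B := by
    intro n
    have h0 : B = ∫ x in Ioc (0:ℝ) 1, x ^ (α - 1) * (1 - x) ^ (β - 1) := by
      rw [hB, incBeta, intervalIntegral.integral_of_le zero_le_one]
    rw [h0]
    refine setIntegral_mono_on (hg_int n) (beta_integrable hα hβ) measurableSet_Ioc ?_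
    intro x hx
    have hx0 : (0:ℝ) < x := hx.1
    have hx1 : (0:ℝ) ≤ 1 - x := by linarith [hx.2]
    rw [hg]
    simp only
    have hxn : (x:ℝ) ^ (n:ℕ) ≤ 1 := pow_le_one₀ hx0.le hx.2
    have hnn : (0:ℝ) ≤ x ^ (α - 1) * (1 - x) ^ (β - 1) := by
      have := Real.rpow_nonneg hx1 (β - 1)
      positivity
    nlinarith [hnn, hxn, pow_nonneg hx0.le n]
  -- |c p|
  have habs : ∀ p : ℕ × ℕ, |c p| =
      (|poch ρ p.1| / p.1.factorial * |u| ^ p.1) * (|poch lam p.2| / p.2.factorial * |v| ^ p.2) := by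
    intro p
    rw [hc]
    simp only [abs_mul, abs_div, abs_pow, Nat.abs_cast]
    ring
  -- summability of coefficient bounds
  have hcs : Summable (fun p : ℕ × ℕ =>
      (|poch ρ p.1| / p.1.factorial * |u| ^ p.1) * (|poch lam p.2| / p.2.factorial * |v| ^ p.2)) := by
    refine Summable.mul_of_nonneg (summable_poch_geom ρ (abs_nonneg u) hu)
      (summable_poch_geom lam (abs_nonneg v) hv) (fun j => by positivity) (fun k => by positivity)
  -- integrability of each h p
  have hh_int : ∀ p : ℕ × ℕ, Integrable (h p) (volume.restrict (Ioc 0 1)) := by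
    intro p
    exact ((hg_int (p.1 + p.2)).const_mul (c p))
  -- norm integrals
  have hh_norm : ∀ p : ℕ × ℕ, ∫ x in Ioc (0:ℝ) 1, ‖h p x‖ = |c p| * ∫ x in Ioc (0:ℝ) 1, g (p.1 + p.2) x := by
    intro p
    rw [← integral_const_mul]
    refine setIntegral_congr_fun measurableSet_Ioc ?_
    intro x hx
    rw [hh]
    simp only [Real.norm_eq_abs, abs_mul]
    rw [abs_of_nonneg (hg_nonneg _ x hx)]
  have hh_norm_summable : Summable (fun p : ℕ × ℕ => ∫ x in Ioc (0:ℝ) 1, ‖h p x‖) := by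
    refine Summable.of_nonneg_of_le (fun p => ?_) (fun p => ?_) (hcs.mul_right B)
    · exact integral_nonneg fun x => norm_nonneg _
    · rw [hh_norm p, habs p]
      refine mul_le_mul_of_nonneg_left (hg_le _) (by positivity)
  -- pointwise sum identity
  have hpt : ∀ x ∈ Ioc (0:ℝ) 1,
      x ^ (α - 1) * (1 - x) ^ (β - 1) * (1 - u * x) ^ (-ρ) * (1 - v * x) ^ (-lam) =
        ∑' p : ℕ × ℕ, h p x := by
    intro x hx
    have hx0 : (0:ℝ) < x := hx.1
    have hx1 : x ≤ 1 := hx.2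
    have hux : |u * x| < 1 := by
      rw [abs_mul, abs_of_pos hx0]
      nlinarith [abs_nonneg u]
    have hvx : |v * x| < 1 := by
      rw [abs_mul, abs_of_pos hx0]
      nlinarith [abs_nonneg v]
    have h1 := binom_hasSum ρ hux
    have h2 := binom_hasSum lam hvx
    have hprodsum : Summable (fun p : ℕ × ℕ =>
        (poch ρ p.1 / p.1.factorial * (u * x) ^ p.1) * (poch lam p.2 / p.2.factorial * (v * x) ^ p.2)) := by
      apply Summable.of_abs
      refine (Summable.mul_of_nonneg (summable_poch_geom ρ (abs_nonneg _) hux)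
        (summable_poch_geom lam (abs_nonneg _) hvx) (fun j => by positivity)
        (fun k => by positivity)).congr fun p => ?_
      simp only [abs_mul, abs_div, abs_pow, Nat.abs_cast]
    have hmul := (h1.mul h2 hprodsum).mul_left (x ^ (α - 1) * (1 - x) ^ (β - 1))
    have hfinal : HasSum (fun p : ℕ × ℕ => h p x)
        (x ^ (α - 1) * (1 - x) ^ (β - 1) * ((1 - u * x) ^ (-ρ) * (1 - v * x) ^ (-lam))) := by
      refine hmul.congr_fun fun p => ?_
      rw [hh, hc, hg]
      simp only [mul_pow, pow_add]
      ring
    rw [hfinal.tsum_eq]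
    ring
  -- main computation
  rw [intervalIntegral.integral_of_le zero_le_one,
    setIntegral_congr_fun measurableSet_Ioc hpt,
    ← integral_tsum_of_summable_integral_norm hh_int hh_norm_summable]
  rw [appellF1, ← tsum_mul_left]
  refine tsum_congr fun p => ?_
  rw [hh]
  rw [integral_const_mul, hg_val, incBeta_shift hα hβ]
  rw [hc]
  have hfj : (p.1.factorial : ℝ) ≠ 0 := by exact_mod_cast p.1.factorial_pos.ne'
  have hfk : (p.2.factorial : ℝ) ≠ 0 := by exact_mod_cast p.2.factorial_pos.ne'
  have hpγ : poch (α + β) (p.1 + p.2) ≠ 0 := (poch_pos (by linarith) _).ne'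
  field_simp
  ring
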